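/- Let (X,G) be a transitive Cantor dynamical system (some G-orbit is dense) with all orbits infinite. Then for every nonempty clopen set A there exists a point x ∈ A and g ∈ G with g(x) ∈ A and g(x) ≠ x; consequently the full group [G] has many involutions. -/

import Mathlib

open Set

variable {X : Type*} [TopologicalSpace X]

noncomputable instance Homeomorph.instGroupStmt : Group (X ≃ₜ X) where
  mul f g := g.trans f
  one := Homeomorph.refl X
  inv := Homeomorph.symm
  mul_assoc _ _ _ := Homeomorph.ext fun _ => rfl
  one_mul _ := Homeomorph.ext fun _ => rfl
  mul_one _ := Homeomorph.ext fun _ => rfl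
  inv_mul_cancel f := Homeomorph.ext fun x => f.symm_apply_apply x

@[simp] theorem Homeomorph.mul_apply' (f g : X ≃ₜ X) (x : X) : (f * g) x = f (g x) := rfl
@[simp] theorem Homeomorph.one_apply' (x : X) : (1 : X ≃ₜ X) x = x := rfl

/-- The support of a homeomorphism. -/
def spr (γ : X ≃ₜ X) : Set X := interior (closure {x | γ x ≠ x})

/-- The orbit of a point under a subgroup of homeomorphisms. -/
def orbitOf (G : Subgroup (X ≃ₜ X)) (x : X) : Set X := {y | ∃ g ∈ G, (g : X ≃ₜ X) x = y}

/-- The full group of a Cantor dynamical system. -/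
def fullGroup (G : Subgroup (X ≃ₜ X)) : Subgroup (X ≃ₜ X) where
  carrier := {γ | ∀ x, γ x ∈ orbitOf G x}
  one_mem' x := ⟨1, G.one_mem, rfl⟩
  mul_mem' {a b} ha hb x := by
    obtain ⟨h, hh, hbx⟩ := hb x
    obtain ⟨g, hg, hax⟩ := ha (b x)
    exact ⟨g * h, G.mul_mem hg hh, by simp only [Homeomorph.mul_apply'] at *; rw [hbx, hax]⟩
  inv_mem' {a} ha := by
    intro x
    obtain ⟨g, hg, hax⟩ := ha (a⁻¹ x)
    refine ⟨g⁻¹, G.inv_mem hg, ?_⟩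
    have : a (a⁻¹ x) = x := a.apply_symm_apply x
    rw [this] at hax
    have : (g⁻¹ : X ≃ₜ X) (g (a⁻¹ x)) = a⁻¹ x := g.symm_apply_apply _
    rw [hax] at this
    exact this



lemma exists_swap_involution {X : Type*} [TopologicalSpace X] (g : X ≃ₜ X) (U : Set X)
    (hU : IsClopen U) (hdisj : Disjoint U (g '' U)) :
    ∃ π : X ≃ₜ X, (∀ x ∈ U, π x = g x) ∧ (∀ x ∈ g '' U, π x = g.symm x) ∧
      (∀ x, x ∉ U → x ∉ g '' U → π x = x) ∧ π * π = 1 := by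
  classical
  set f : X → X := U.piecewise g ((g '' U).piecewise g.symm id) with hf
  have hgU : IsClopen (g '' U) := by
    have himg : ⇑g '' U = ⇑g.symm ⁻¹' U := by
      ext z
      constructor
      · rintro ⟨u, hu, rfl⟩; simpa using hu
      · intro hz; exact ⟨g.symm z, hz, g.apply_symm_apply z⟩
    rw [himg]
    exact hU.preimage g.symm.continuous
  have h1 : ∀ x ∈ U, f x = g x := fun x hx => Set.piecewise_eq_of_mem _ _ _ hx
  have h2 : ∀ x ∈ g '' U, f x = g.symm x := fun x hx => by
    rw [hf, Set.piecewise_eq_of_notMem _ _ _ (Set.disjoint_right.mp hdisj hx),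
      Set.piecewise_eq_of_mem _ _ _ hx]
  have h3 : ∀ x, x ∉ U → x ∉ g '' U → f x = x := fun x hx hx' => by
    rw [hf, Set.piecewise_eq_of_notMem _ _ _ hx, Set.piecewise_eq_of_notMem _ _ _ hx']; rfl
  have hinv : ∀ x, f (f x) = x := by
    intro x
    by_cases hx : x ∈ U
    · rw [h1 x hx, h2 _ ⟨x, hx, rfl⟩, g.symm_apply_apply]
    · by_cases hx' : x ∈ g '' U
      · obtain ⟨u, hu, rfl⟩ := hx'
        rw [h2 _ ⟨u, hu, rfl⟩, g.symm_apply_apply, h1 u hu]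
      · rw [h3 x hx hx', h3 x hx hx']
  have hcont : Continuous f := by
    refine Continuous.piecewise ?_ g.continuous (Continuous.piecewise ?_ g.symm.continuous
      continuous_id)
    · simp [hU.frontier_eq]
    · simp [hgU.frontier_eq]
  exact ⟨⟨⟨f, f, hinv, hinv⟩, hcont, hcont⟩, h1, h2, h3, Homeomorph.ext fun x => hinv x⟩

/-- A transitive Cantor system with infinite orbits returns to every clopen set; hence its full
group has many involutions. -/
theorem transitive_many_involutions {X : Type*} [TopologicalSpace X] [CompactSpace X] [TopologicalSpace.MetrizableSpace X] [TotallyDisconnectedSpace X] [PerfectSpace X] [Nonempty X]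
    (G : Subgroup (X ≃ₜ X))
    (htrans : ∃ x : X, Dense (orbitOf G x))
    (hinf : ∀ x : X, (orbitOf G x).Infinite) :
    (∀ A : Set X, IsClopen A → A.Nonempty →
        ∃ x ∈ A, ∃ g ∈ G, (g : X ≃ₜ X) x ∈ A ∧ (g : X ≃ₜ X) x ≠ x) ∧
    ∀ A : Set X, A = interior (closure A) → A.Nonempty →
      ∃ π ∈ fullGroup G, π * π = 1 ∧ π ≠ 1 ∧ spr π ⊆ A := by
  classical
  have part1 : ∀ A : Set X, IsClopen A → A.Nonempty →
      ∃ x ∈ A, ∃ g ∈ G, (g : X ≃ₜ X) x ∈ A ∧ (g : X ≃ₜ X) x ≠ x := by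
    intro A hA hAne
    obtain ⟨x0, hx0⟩ := htrans
    obtain ⟨y, hyOrb, hyA⟩ := hx0.exists_mem_open hA.isOpen hAne
    obtain ⟨g0, hg0, hg0y⟩ := hyOrb
    -- A minus {y} is open and nonempty since X is perfect
    obtain ⟨z, hz, hzy⟩ : ∃ z ∈ A ∩ Set.univ, z ≠ y := by
      have := preperfect_iff_nhds.mp PerfectSpace.univ_preperfect y (Set.mem_univ y)
        A (hA.isOpen.mem_nhds hyA)
      exact this
    have hopen : IsOpen (A \ {y}) := hA.isOpen.sdiff isClosed_singleton
    obtain ⟨w, hwOrb, hwA, hwy⟩ : ∃ w ∈ orbitOf G x0, w ∈ A ∧ w ≠ y := by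
      obtain ⟨w, hw1, hw2⟩ := hx0.exists_mem_open hopen ⟨z, hz.1, hzy⟩
      exact ⟨w, hw1, hw2.1, hw2.2⟩
    obtain ⟨g1, hg1, hg1x⟩ := hwOrb
    refine ⟨y, hyA, g1 * g0⁻¹, G.mul_mem hg1 (G.inv_mem hg0), ?_, ?_⟩
    · have : (g1 * g0⁻¹) y = w := by
        have : (g0⁻¹ : X ≃ₜ X) y = x0 := by rw [← hg0y]; exact g0.symm_apply_apply x0
        simp only [Homeomorph.mul_apply', this, hg1x]
      rw [this]; exact hwA
    · have : (g1 * g0⁻¹) y = w := by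
        have : (g0⁻¹ : X ≃ₜ X) y = x0 := by rw [← hg0y]; exact g0.symm_apply_apply x0
        simp only [Homeomorph.mul_apply', this, hg1x]
      rw [this]; exact hwy
  refine ⟨part1, ?_⟩
  intro A hAreg hAne
  have hAopen : IsOpen A := hAreg ▸ isOpen_interior
  obtain ⟨a, ha⟩ := hAne
  obtain ⟨B, hB, haB, hBA⟩ := compact_exists_isClopen_in_isOpen hAopen ha
  obtain ⟨x, hxB, g, hg, hgxB, hgx⟩ := part1 B hB ⟨a, haB⟩
  -- a clopen set containing x but not g x
  obtain ⟨C, ⟨hxC, hC⟩, hCsub⟩ := (nhds_basis_clopen x).mem_iff.mp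
    (isOpen_compl_singleton.mem_nhds (by simpa [eq_comm] using hgx : x ∈ ({(g : X ≃ₜ X) x}ᶜ : Set X)))
  set U : Set X := B ∩ (g : X ≃ₜ X) ⁻¹' B ∩ C ∩ (g : X ≃ₜ X) ⁻¹' Cᶜ with hUdef
  have hUclopen : IsClopen U :=
    (((hB.inter (hB.preimage g.continuous)).inter hC).inter
      (hC.compl.preimage g.continuous))
  have hxU : x ∈ U := by
    refine ⟨⟨⟨hxB, hgxB⟩, hxC⟩, ?_⟩
    exact fun h => hCsub h rfl
  have hUB : U ⊆ B := fun u hu => hu.1.1.1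
  have hgUB : (g : X ≃ₜ X) '' U ⊆ B := by
    rintro _ ⟨u, hu, rfl⟩; exact hu.1.1.2
  have hdisj : Disjoint U ((g : X ≃ₜ X) '' U) := by
    rw [Set.disjoint_left]
    rintro y hy ⟨u, hu, rfl⟩
    exact hu.2 hy.1.2
  obtain ⟨π, hπ1, hπ2, hπ3, hππ⟩ := exists_swap_involution (g : X ≃ₜ X) U hUclopen hdisj
  have hgUclopen : IsClopen ((g : X ≃ₜ X) '' U) := by
    have himg : ⇑g '' U = ⇑g.symm ⁻¹' U := by
      ext z
      constructor
      · rintro ⟨u, hu, rfl⟩; simpa using hu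
      · intro hz; exact ⟨g.symm z, hz, g.apply_symm_apply z⟩
    rw [himg]
    exact hUclopen.preimage g.symm.continuous
  refine ⟨π, ?_, hππ, ?_, ?_⟩
  · intro z
    by_cases hz : z ∈ U
    · exact ⟨g, hg, (hπ1 z hz).symm⟩
    by_cases hz' : z ∈ (g : X ≃ₜ X) '' U
    · exact ⟨g⁻¹, G.inv_mem hg, (hπ2 z hz').symm⟩
    · exact ⟨1, G.one_mem, (hπ3 z hz hz').symm⟩
  · intro h
    apply hgx
    rw [← hπ1 x hxU, h, Homeomorph.one_apply']
  · have hsub : {z | π z ≠ z} ⊆ U ∪ (g : X ≃ₜ X) '' U := by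
      intro z hz
      by_contra hc
      rw [Set.mem_union] at hc
      push_neg at hc
      exact hz (hπ3 z hc.1 hc.2)
    have hclosed : IsClosed (U ∪ (g : X ≃ₜ X) '' U) := (hUclopen.union hgUclopen).isClosed
    have : spr π ⊆ U ∪ (g : X ≃ₜ X) '' U :=
      interior_subset.trans (hclosed.closure_subset_iff.mpr hsub)
    refine this.trans ?_
    rintro z (hz | hz)
    · exact hBA (hUB hz)
    · exact hBA (hgUB hz)
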